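/- For every vector x ∈ ℝⁿ there exist infinitely many integer vectors q ∈ ℤⁿ and integers p ∈ ℤ such that |p + x · q| < ‖q‖^{-n}, where ‖·‖ denotes the supremum norm and x · q is the standard dot product. -/

import Mathlib

open scoped BigOperators

/-- Dirichlet pigeonhole step: for every `N ≥ 1` there is a nonzero integer vector `q`
with `‖q‖ ≤ N` and an integer `p` such that `|p + x·q| < (N^n)⁻¹`. -/
private lemma dirichlet_step (n N : ℕ) (hn : 0 < n) (hN : 0 < N) (x : Fin n → ℝ) :
    ∃ (p : ℤ) (q : Fin n → ℤ), q ≠ 0 ∧ (∀ i, |q i| ≤ (N : ℤ)) ∧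
      |(p : ℝ) + ∑ i, x i * (q i : ℝ)| < ((N : ℝ) ^ n)⁻¹ := by
  set K : ℕ := (N + 1) ^ n - 1 with hKdef
  have hNK : N ^ n ≤ K := by
    have h := Nat.pow_lt_pow_left (show N < N + 1 by omega) hn.ne'
    omega
  have hKpos : 0 < K := lt_of_lt_of_le (pow_pos hN n) hNK
  have hKR : (0 : ℝ) < (K : ℝ) := by exact_mod_cast hKpos
  set S : (Fin n → Fin (N + 1)) → ℝ := fun a => ∑ i, x i * ((a i : ℕ) : ℝ) with hSdef
  have hfl : ∀ a : Fin n → Fin (N + 1),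
      0 ≤ ⌊(K : ℝ) * Int.fract (S a)⌋ ∧ ⌊(K : ℝ) * Int.fract (S a)⌋ < (K : ℤ) := by
    intro a
    constructor
    · exact Int.floor_nonneg.mpr (mul_nonneg hKR.le (Int.fract_nonneg _))
    · apply Int.floor_lt.mpr
      push_cast
      calc (K : ℝ) * Int.fract (S a) < (K : ℝ) * 1 :=
            (mul_lt_mul_iff_of_pos_left hKR).mpr (Int.fract_lt_one _)
        _ = (K : ℝ) := mul_one _
  set g : (Fin n → Fin (N + 1)) → Fin K := fun a =>
    ⟨(⌊(K : ℝ) * Int.fract (S a)⌋).toNat, by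
      have h := hfl a; omega⟩ with hgdef
  have hcard : Fintype.card (Fin K) < Fintype.card (Fin n → Fin (N + 1)) := by
    simp only [Fintype.card_fin, Fintype.card_fun]
    omega
  obtain ⟨a, b, hab, hg⟩ := Fintype.exists_ne_map_eq_of_card_lt g hcard
  have hfloor : ⌊(K : ℝ) * Int.fract (S a)⌋ = ⌊(K : ℝ) * Int.fract (S b)⌋ := by
    have := congrArg Fin.val hg
    simp only [hgdef] at this
    have ha := hfl a; have hb := hfl b
    omega
  have hclose : |Int.fract (S a) - Int.fract (S b)| < ((K : ℝ))⁻¹ := by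
    rw [abs_sub_lt_iff]
    have h1 := Int.floor_le ((K : ℝ) * Int.fract (S a))
    have h2 := Int.lt_floor_add_one ((K : ℝ) * Int.fract (S a))
    have h3 := Int.floor_le ((K : ℝ) * Int.fract (S b))
    have h4 := Int.lt_floor_add_one ((K : ℝ) * Int.fract (S b))
    rw [hfloor] at h1 h2
    have hKK : (K : ℝ) * (K : ℝ)⁻¹ = 1 := mul_inv_cancel₀ hKR.ne'
    constructor <;> rw [sub_lt_iff_lt_add, ← mul_lt_mul_iff_of_pos_left hKR] <;>
      nlinarith [hKK]
  refine ⟨⌊S b⌋ - ⌊S a⌋, fun i => ((a i : ℕ) : ℤ) - ((b i : ℕ) : ℤ), ?_, ?_, ?_⟩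
  · intro h
    apply hab
    funext i
    have := congrFun h i
    simp only [Pi.zero_apply, sub_eq_zero] at this
    exact Fin.ext (by exact_mod_cast this)
  · intro i
    have ha : (a i : ℕ) ≤ N := Nat.lt_succ_iff.mp (a i).isLt
    have hb : (b i : ℕ) ≤ N := Nat.lt_succ_iff.mp (b i).isLt
    rw [abs_le]
    constructor <;> [skip; skip] <;> push_cast <;> omega
  · have hval : ((⌊S b⌋ - ⌊S a⌋ : ℤ) : ℝ) + ∑ i, x i * ((((a i : ℕ) : ℤ) - ((b i : ℕ) : ℤ) : ℤ) : ℝ)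
        = Int.fract (S a) - Int.fract (S b) := by
      rw [Int.fract, Int.fract]
      push_cast
      rw [Finset.sum_congr rfl (fun i _ => by ring :
        ∀ i ∈ Finset.univ, x i * (((a i : ℕ) : ℝ) - ((b i : ℕ) : ℝ))
          = x i * ((a i : ℕ) : ℝ) - x i * ((b i : ℕ) : ℝ)), Finset.sum_sub_distrib]
      simp only [hSdef]
      ring
    rw [hval]
    refine lt_of_lt_of_le hclose ?_
    apply inv_anti₀ (by positivity)
    exact_mod_cast hNK

private lemma mem_key (n : ℕ) (x : Fin n → ℝ) (N : ℕ) (hN : 0 < N)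
    (p : ℤ) (q : Fin n → ℤ) (hq : q ≠ 0) (hb : ∀ i, |q i| ≤ (N : ℤ))
    (hv : |(p : ℝ) + ∑ i, x i * (q i : ℝ)| < ((N : ℝ) ^ n)⁻¹) :
    |(p : ℝ) + ∑ i, x i * (q i : ℝ)| <
      ‖(fun i => (q i : ℝ) : Fin n → ℝ)‖ ^ (-(n : ℝ)) := by
  have hqR : (fun i => (q i : ℝ) : Fin n → ℝ) ≠ 0 := by
    intro h
    apply hq; funext i
    simpa using congrFun h i
  have hpos : 0 < ‖(fun i => (q i : ℝ) : Fin n → ℝ)‖ := norm_pos_iff.mpr hqR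
  have hle : ‖(fun i => (q i : ℝ) : Fin n → ℝ)‖ ≤ (N : ℝ) := by
    refine (pi_norm_le_iff_of_nonneg (by positivity)).mpr fun i => ?_
    rw [Real.norm_eq_abs, ← Int.cast_abs]
    exact_mod_cast hb i
  have h2 : ((N : ℝ)) ^ (-(n : ℝ)) ≤ ‖(fun i => (q i : ℝ) : Fin n → ℝ)‖ ^ (-(n : ℝ)) :=
    Real.rpow_le_rpow_of_nonpos hpos hle (neg_nonpos.mpr (Nat.cast_nonneg n))
  have h3 : ((N : ℝ)) ^ (-(n : ℝ)) = ((N : ℝ) ^ n)⁻¹ := by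
    rw [Real.rpow_neg (Nat.cast_nonneg N), Real.rpow_natCast]
  exact lt_of_lt_of_le hv (h3 ▸ h2)

/-- Dirichlet-type theorem for linear forms: for every `x ∈ ℝⁿ` there are infinitely many
pairs `(p, q) ∈ ℤ × ℤⁿ` with `|p + x·q| < ‖q‖^{-n}` (supremum norm). -/
theorem stmt0 (n : ℕ) (hn : 0 < n) (x : Fin n → ℝ) :
    {pq : ℤ × (Fin n → ℤ) | pq.2 ≠ 0 ∧
      |(pq.1 : ℝ) + ∑ i, x i * (pq.2 i : ℝ)| <
        ‖(fun i => (pq.2 i : ℝ) : Fin n → ℝ)‖ ^ (-(n : ℝ))}.Infinite := by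
  by_cases hres : ∃ q : Fin n → ℤ, q ≠ 0 ∧ ∃ p : ℤ, (p : ℝ) + ∑ i, x i * (q i : ℝ) = 0
  · obtain ⟨q, hq, p, hp⟩ := hres
    obtain ⟨i0, hi0⟩ : ∃ i, q i ≠ 0 := by
      by_contra h; push_neg at h; exact hq (funext h)
    apply Set.infinite_of_injective_forall_mem
      (f := fun k : ℕ => ((((k : ℤ) + 1) * p, fun i => ((k : ℤ) + 1) * q i) :
        ℤ × (Fin n → ℤ)))
    · intro k l hkl
      have h1 := congrFun (congrArg Prod.snd hkl) i0
      simp only at h1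
      have h2 : (k : ℤ) + 1 = (l : ℤ) + 1 := mul_right_cancel₀ hi0 h1
      exact_mod_cast (by omega : (k : ℤ) = (l : ℤ))
    · intro k
      have hqk : (fun i => ((k : ℤ) + 1) * q i) ≠ (0 : Fin n → ℤ) := by
        intro h
        have := congrFun h i0
        simp only [Pi.zero_apply, mul_eq_zero] at this
        rcases this with h' | h' <;> [omega; exact hi0 h']
      refine ⟨hqk, ?_⟩
      have hval : (((((k : ℤ) + 1) * p : ℤ)) : ℝ) +
          ∑ i, x i * ((((k : ℤ) + 1) * q i : ℤ) : ℝ) = 0 := by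
        push_cast
        have hsum : ∑ i, x i * (((k : ℝ) + 1) * (q i : ℝ))
            = ((k : ℝ) + 1) * ∑ i, x i * (q i : ℝ) := by
          rw [Finset.mul_sum]; exact Finset.sum_congr rfl fun i _ => by ring
        rw [hsum]
        nlinarith [hp]
      simp only [hval, abs_zero]
      apply Real.rpow_pos_of_pos
      apply norm_pos_iff.mpr
      intro h
      apply hqk
      funext i
      have h5 := congrFun h i
      rw [Pi.zero_apply] at h5
      show ((k : ℤ) + 1) * q i = 0
      exact_mod_cast h5
  · push_neg at hres
    by_contra hfin
    rw [Set.not_infinite] at hfin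
    obtain ⟨p1, q1, h1, h2, h3⟩ := dirichlet_step n 1 hn one_pos x
    have hmem1 : ((p1, q1) : ℤ × (Fin n → ℤ)) ∈ {pq : ℤ × (Fin n → ℤ) | pq.2 ≠ 0 ∧
        |(pq.1 : ℝ) + ∑ i, x i * (pq.2 i : ℝ)| <
          ‖(fun i => (pq.2 i : ℝ) : Fin n → ℝ)‖ ^ (-(n : ℝ))} :=
      ⟨h1, mem_key n x 1 one_pos p1 q1 h1 h2 h3⟩
    have hFne : hfin.toFinset.Nonempty := ⟨(p1, q1), hfin.mem_toFinset.mpr hmem1⟩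
    set v : ℤ × (Fin n → ℤ) → ℝ := fun pq => |(pq.1 : ℝ) + ∑ i, x i * (pq.2 i : ℝ)| with hv
    set δ := hfin.toFinset.inf' hFne v with hδ
    have hδpos : 0 < δ := by
      rw [hδ, Finset.lt_inf'_iff]
      intro b hb
      have hbT := hfin.mem_toFinset.mp hb
      exact abs_pos.mpr (hres b.2 hbT.1 b.1)
    set N : ℕ := ⌈δ⁻¹⌉₊ + 1 with hNdef
    have hN : 0 < N := Nat.succ_pos _
    have hN1 : (1 : ℝ) ≤ (N : ℝ) := by exact_mod_cast hN
    obtain ⟨p, q, hq, hb, hvv⟩ := dirichlet_step n N hn hN x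
    have hmem : ((p, q) : ℤ × (Fin n → ℤ)) ∈ {pq : ℤ × (Fin n → ℤ) | pq.2 ≠ 0 ∧
        |(pq.1 : ℝ) + ∑ i, x i * (pq.2 i : ℝ)| <
          ‖(fun i => (pq.2 i : ℝ) : Fin n → ℝ)‖ ^ (-(n : ℝ))} :=
      ⟨hq, mem_key n x N hN p q hq hb hvv⟩
    have hge : δ ≤ v (p, q) := Finset.inf'_le v (hfin.mem_toFinset.mpr hmem)
    have hNδ : (N : ℝ)⁻¹ < δ := by
      have h4 : δ⁻¹ < (N : ℝ) := by
        refine lt_of_le_of_lt (Nat.le_ceil _) ?_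
        exact_mod_cast Nat.lt_succ_self ⌈δ⁻¹⌉₊
      have := (inv_lt_inv₀ (by positivity) (by positivity)).mpr h4
      rwa [inv_inv] at this
    have hpow : ((N : ℝ) ^ n)⁻¹ ≤ (N : ℝ)⁻¹ := by
      apply inv_anti₀ (by positivity)
      calc (N : ℝ) = (N : ℝ) ^ 1 := (pow_one _).symm
        _ ≤ (N : ℝ) ^ n := pow_le_pow_right₀ hN1 hn
    have : v (p, q) < δ := by
      rw [hv]
      exact lt_of_lt_of_le hvv (le_of_lt (lt_of_le_of_lt hpow hNδ))
    linarith
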